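/- For every real k > −1, the ratio R_k(s) := I_{k+2}(s) / I_k(s) is differentiable on ℝ and satisfies the Riccati equation 2 R_k′(s) = R_k(s)² + s · R_k(s) − (k+1) for all s ∈ ℝ. -/

import Mathlib

open MeasureTheory

/-- `I k s = ∫₀^∞ x^k e^{-x⁴/4 - s x²/2} dx`. -/
noncomputable def I (k s : ℝ) : ℝ :=
  ∫ x in Set.Ioi (0 : ℝ), x ^ k * Real.exp (-x ^ 4 / 4 - s * x ^ 2 / 2)

open Real Set Filter in
lemma exp_bound' (s x : ℝ) : -x^4/4 + s*x^2/2 + x ≤ s^2/2 + 2 := by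
  nlinarith [sq_nonneg (x^2/2 - s), sq_nonneg (x^2 - 2), sq_nonneg (x-1)]

open Real Set Filter in
lemma rpow_add_nat'' {x : ℝ} (hx : 0 < x) (k : ℝ) (n : ℕ) : x ^ (k + (n:ℝ)) = x ^ k * x ^ n :=
  Real.rpow_add_natCast hx.ne' k n

open Real Set Filter in
lemma integrableOn_aux (k c : ℝ) (hk : -1 < k) :
    IntegrableOn (fun x : ℝ => x ^ k * Real.exp (-x^4/4 + c*x^2/2)) (Set.Ioi (0:ℝ)) := by
  have hG := (Real.GammaIntegral_convergent (show (0:ℝ) < k+1 by linarith)).const_mul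
    (Real.exp (c^2/2 + 2))
  apply Integrable.mono' hG
  · apply ContinuousOn.aestronglyMeasurable _ measurableSet_Ioi
    exact (continuousOn_id.rpow_const (fun x hx => Or.inl (ne_of_gt hx))).mul
      (Real.continuous_exp.comp (by continuity)).continuousOn
  · filter_upwards [ae_restrict_mem measurableSet_Ioi] with x hx
    have hx0 : (0:ℝ) < x := hx
    rw [Real.norm_eq_abs, abs_of_nonneg (by positivity)]
    have h1 : Real.exp (-x^4/4 + c*x^2/2) ≤ Real.exp (c^2/2 + 2) * Real.exp (-x) := by
      rw [← Real.exp_add]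
      exact Real.exp_le_exp.2 (by nlinarith [exp_bound' c x])
    calc x ^ k * Real.exp (-x^4/4 + c*x^2/2)
        ≤ x ^ k * (Real.exp (c^2/2 + 2) * Real.exp (-x)) := by
          exact mul_le_mul_of_nonneg_left h1 (Real.rpow_nonneg hx0.le k)
      _ = Real.exp (c^2/2 + 2) * (Real.exp (-x) * x ^ (k+1-1)) := by ring_nf

open Real Set Filter in
lemma integrableOn_I (k s : ℝ) (hk : -1 < k) :
    IntegrableOn (fun x : ℝ => x ^ k * Real.exp (-x^4/4 - s*x^2/2)) (Set.Ioi (0:ℝ)) := by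
  have h := integrableOn_aux k (-s) hk
  have he : (fun x : ℝ => x ^ k * Real.exp (-x^4/4 + -s*x^2/2))
      = fun x : ℝ => x ^ k * Real.exp (-x^4/4 - s*x^2/2) := by
    funext x; congr 1; congr 1; ring
  rwa [he] at h

open Real Set Filter in
lemma I_integrable (k s : ℝ) (hk : -1 < k) :
    IntegrableOn (fun x : ℝ => x ^ k * Real.exp (-x ^ 4 / 4 - s * x ^ 2 / 2))
      (Set.Ioi (0:ℝ)) := integrableOn_I k s hk

open Real Set Filter in
lemma I_pos (k s : ℝ) (hk : -1 < k) : 0 < I k s := by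
  rw [I]
  rw [setIntegral_pos_iff_support_of_nonneg_ae]
  · rw [show (Function.support fun x : ℝ => x ^ k * Real.exp (-x ^ 4 / 4 - s * x ^ 2 / 2))
        ∩ Set.Ioi 0 = Set.Ioi (0:ℝ) from ?_]
    · simp
    · refine Set.inter_eq_right.2 fun x hx => ?_
      have hx0 : (0:ℝ) < x := hx
      exact ne_of_gt (by positivity)
  · filter_upwards [ae_restrict_mem measurableSet_Ioi] with x hx
    have hx0 : (0:ℝ) < x := hx
    positivity
  · exact I_integrable k s hk

open Real Set Filter in
lemma hasDerivAt_exp_part (x s : ℝ) :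
    HasDerivAt (fun t : ℝ => Real.exp (-x ^ 4 / 4 - t * x ^ 2 / 2))
      (Real.exp (-x ^ 4 / 4 - s * x ^ 2 / 2) * (-(x^2/2))) s := by
  have h0 : HasDerivAt (fun t : ℝ => -x ^ 4 / 4 + -(x^2/2) * t) (-(x^2/2)) s := by
    simpa using ((hasDerivAt_id s).const_mul (-(x^2/2))).const_add (-x ^ 4 / 4)
  have he : (fun t : ℝ => -x ^ 4 / 4 + -(x^2/2) * t) = fun t : ℝ => -x ^ 4 / 4 - t * x ^ 2 / 2 := by
    funext t; ring
  rw [he] at h0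
  exact h0.exp

open Real Set Filter in
lemma hasDerivAt_I (k : ℝ) (hk : -1 < k) (s : ℝ) :
    HasDerivAt (fun t => I k t) (-(1/2) * I (k+2) s) s := by
  have key := hasDerivAt_integral_of_dominated_loc_of_deriv_le (μ := volume.restrict (Set.Ioi 0))
    (F := fun t (x : ℝ) => x ^ k * Real.exp (-x ^ 4 / 4 - t * x ^ 2 / 2))
    (F' := fun t (x : ℝ) => -(1/2) * (x ^ (k+2) * Real.exp (-x ^ 4 / 4 - t * x ^ 2 / 2)))
    (x₀ := s)
    (bound := fun x : ℝ => (1/2) * (x ^ (k+2) * Real.exp (-x^4/4 + (|s|+1)*x^2/2)))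
    (Metric.ball_mem_nhds s one_pos)
    ?_ (I_integrable k s hk) ?_ ?_ ?_ ?_
  · have := key.2
    have heq : ∫ x in Set.Ioi (0:ℝ),
        -(1/2) * (x ^ (k+2) * Real.exp (-x ^ 4 / 4 - s * x ^ 2 / 2)) = -(1/2) * I (k+2) s := by
      rw [MeasureTheory.integral_const_mul]; rfl
    rw [heq] at this
    exact this
  · filter_upwards with t
    exact ((integrableOn_I k t hk)).aestronglyMeasurable
  · exact (((integrableOn_I (k+2) s (by linarith)).const_mul (-(1/2)))).aestronglyMeasurable
  · filter_upwards [ae_restrict_mem measurableSet_Ioi] with x hx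
    intro t ht
    have hx0 : (0:ℝ) < x := hx
    have habs : ‖-(1/2) * (x ^ (k+2) * Real.exp (-x ^ 4 / 4 - t * x ^ 2 / 2))‖
        = 1/2 * (x ^ (k+2) * Real.exp (-x ^ 4 / 4 - t * x ^ 2 / 2)) := by
      rw [Real.norm_eq_abs, abs_mul, abs_neg, abs_of_nonneg (by positivity : (0:ℝ) ≤ (1:ℝ)/2),
        abs_of_nonneg (by positivity)]
    rw [habs]
    have ht' : |t| ≤ |s| + 1 := by
      have := abs_sub_abs_le_abs_sub t s
      have h2 : |t - s| ≤ 1 := le_of_lt (by simpa [Real.dist_eq] using ht)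
      linarith
    have hexp : Real.exp (-x ^ 4 / 4 - t * x ^ 2 / 2)
        ≤ Real.exp (-x^4/4 + (|s|+1)*x^2/2) := by
      apply Real.exp_le_exp.2
      have h3 : -t ≤ |s| + 1 := by have := neg_abs_le t; linarith
      nlinarith [sq_nonneg x]
    have h0 : (0:ℝ) ≤ x ^ (k+2) := Real.rpow_nonneg hx0.le _
    nlinarith [hexp, h0]
  · exact (integrableOn_aux (k+2) (|s|+1) (by linarith)).const_mul _
  · filter_upwards [ae_restrict_mem measurableSet_Ioi] with x hx
    intro t ht
    have hx0 : (0:ℝ) < x := hx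
    have h := (hasDerivAt_exp_part x t).const_mul (x ^ k)
    have he : x ^ k * (Real.exp (-x ^ 4 / 4 - t * x ^ 2 / 2) * (-(x^2/2)))
        = -(1/2) * (x ^ (k+2) * Real.exp (-x ^ 4 / 4 - t * x ^ 2 / 2)) := by
      rw [show (k+2:ℝ) = k + (2:ℕ) by norm_num, rpow_add_nat'' hx0]
      ring
    rwa [he] at h

open Real Set Filter Topology in
lemma ibp (k : ℝ) (hk : -1 < k) (s : ℝ) :
    (k+1) * I k s = I (k+4) s + s * I (k+2) s := by
  set f : ℝ → ℝ := fun y => y ^ (k+1) * Real.exp (-y ^ 4 / 4 - s * y ^ 2 / 2) with hf_def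
  set g : ℝ → ℝ := fun y => (k+1) * (y ^ k * Real.exp (-y ^ 4 / 4 - s * y ^ 2 / 2))
      - y ^ (k+4) * Real.exp (-y ^ 4 / 4 - s * y ^ 2 / 2)
      - s * (y ^ (k+2) * Real.exp (-y ^ 4 / 4 - s * y ^ 2 / 2)) with hg_def
  have h1 := integrableOn_I k s hk
  have h2 := integrableOn_I (k+2) s (by linarith)
  have h3 := integrableOn_I (k+4) s (by linarith)
  have hgint : IntegrableOn g (Set.Ioi (0:ℝ)) := ((h1.const_mul (k+1)).sub h3).sub (h2.const_mul s)
  have hderiv : ∀ x ∈ Set.Ioi (0:ℝ), HasDerivAt f (g x) x := by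
    intro x hx
    have hx0 : (0:ℝ) < x := hx
    have hE : HasDerivAt (fun y : ℝ => -y ^ 4 / 4 - s * y ^ 2 / 2) (-x^3 - s*x) x := by
      have h := (((hasDerivAt_pow 4 x).div_const 4).neg).sub
        (((hasDerivAt_pow 2 x).const_mul s).div_const 2)
      have he : (fun y : ℝ => -(y^4/4) - s*y^2/2) = fun y : ℝ => -y ^ 4 / 4 - s * y ^ 2 / 2 := by
        funext y; ring
      replace h : HasDerivAt (fun y : ℝ => -(y^4/4) - s*y^2/2) _ x := h
      rw [he] at h
      convert h using 1
      push_cast; ring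
    have hxp : HasDerivAt (fun y : ℝ => y ^ (k+1)) ((k+1) * x ^ k) x := by
      have := Real.hasDerivAt_rpow_const (x := x) (p := k+1) (Or.inl hx0.ne')
      simpa [show k+1-1 = k by ring] using this
    have h := hxp.mul hE.exp
    have he2 : (k+1) * x ^ k * Real.exp (-x ^ 4 / 4 - s * x ^ 2 / 2)
        + x ^ (k+1) * (Real.exp (-x ^ 4 / 4 - s * x ^ 2 / 2) * (-x^3 - s*x)) = g x := by
      rw [hg_def]
      have e4 : x ^ (k+4) = x ^ (k+1) * x ^ (3:ℕ) := by
        rw [show (k+4:ℝ) = (k+1) + ((3:ℕ):ℝ) by push_cast; ring, rpow_add_nat'' hx0]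
      have e2 : x ^ (k+2) = x ^ (k+1) * x ^ (1:ℕ) := by
        rw [show (k+2:ℝ) = (k+1) + ((1:ℕ):ℝ) by push_cast; ring, rpow_add_nat'' hx0]
      simp only [e4, e2]
      ring
    rw [← he2]
    exact h
  have hcont : ContinuousWithinAt f (Set.Ici (0:ℝ)) 0 := by
    apply ContinuousAt.continuousWithinAt
    exact ((Real.continuousAt_rpow_const 0 (k+1) (Or.inr (by linarith))).mul
      ((Real.continuous_exp.comp (by continuity)).continuousAt))
  have htend : Tendsto f atTop (𝓝 0) := by
    apply squeeze_zero' (g := fun y => Real.exp (s^2/2 + 2) * (y ^ (k+1) * Real.exp (-(1:ℝ)*y)))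
    · filter_upwards [eventually_gt_atTop (0:ℝ)] with y hy
      positivity
    · filter_upwards [eventually_gt_atTop (0:ℝ)] with y hy
      have hb : Real.exp (-y ^ 4 / 4 - s * y ^ 2 / 2)
          ≤ Real.exp (s^2/2 + 2) * Real.exp (-(1:ℝ)*y) := by
        rw [← Real.exp_add]
        apply Real.exp_le_exp.2
        nlinarith [exp_bound' (-s) y]
      calc f y ≤ y ^ (k+1) * (Real.exp (s^2/2 + 2) * Real.exp (-(1:ℝ)*y)) :=
            mul_le_mul_of_nonneg_left hb (Real.rpow_nonneg hy.le _)
        _ = Real.exp (s^2/2 + 2) * (y ^ (k+1) * Real.exp (-(1:ℝ)*y)) := by ring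
    · simpa using (tendsto_rpow_mul_exp_neg_mul_atTop_nhds_zero (k+1) 1 one_pos).const_mul
        (Real.exp (s^2/2 + 2))
  have hint := integral_Ioi_of_hasDerivAt_of_tendsto hcont hderiv hgint htend
  have hf0 : f 0 = 0 := by
    simp [hf_def, Real.zero_rpow (show k+1 ≠ 0 by linarith)]
  rw [hf0, sub_zero] at hint
  have hexp : ∫ x in Set.Ioi (0:ℝ), g x
      = (k+1) * I k s - I (k+4) s - s * I (k+2) s := by
    have hA : IntegrableOn (fun x : ℝ => (k+1) * (x ^ k * Real.exp (-x ^ 4 / 4 - s * x ^ 2 / 2))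
        - x ^ (k+4) * Real.exp (-x ^ 4 / 4 - s * x ^ 2 / 2)) (Set.Ioi (0:ℝ)) :=
      (h1.const_mul (k+1)).sub h3
    simp only [hg_def]
    rw [MeasureTheory.integral_sub hA (h2.const_mul s),
      MeasureTheory.integral_sub (h1.const_mul (k+1)) h3,
      MeasureTheory.integral_const_mul, MeasureTheory.integral_const_mul]
    rfl
  rw [hexp] at hint
  linarith

/-- The ratio `R_k(s) = I_{k+2}(s)/I_k(s)` is differentiable and satisfies the Riccati
equation `2 R_k'(s) = R_k(s)² + s R_k(s) - (k+1)`. -/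
theorem moment_ratio_riccati (k : ℝ) (hk : -1 < k) :
    Differentiable ℝ (fun s => I (k + 2) s / I k s) ∧
    ∀ s : ℝ, 2 * deriv (fun s => I (k + 2) s / I k s) s =
      (I (k + 2) s / I k s) ^ 2 + s * (I (k + 2) s / I k s) - (k + 1) := by
  have hD : ∀ s : ℝ, HasDerivAt (fun s => I (k + 2) s / I k s)
      ((-(1/2) * I (k+4) s * I k s - I (k+2) s * (-(1/2) * I (k+2) s)) / (I k s)^2) s := by
    intro s
    have D1 := hasDerivAt_I k hk s
    have D2 := hasDerivAt_I (k+2) (by linarith) s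
    rw [show (k+2+2:ℝ) = k+4 by ring] at D2
    exact D2.div D1 (I_pos k s hk).ne'
  constructor
  · exact fun s => (hD s).differentiableAt
  · intro s
    rw [(hD s).deriv]
    have hibp := ibp k hk s
    have hpos := I_pos k s hk
    field_simp
    linear_combination (I k s) * hibp
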